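/- Let d ≥ 2, a ∈ ℤ_p, and let M be a Lie subalgebra of L^d(a) of rank e ≥ 2 as a ℤ_p-module. Then M is isomorphic to L^e(p^s a) for some s ∈ ℕ ∪ {∞} (with p^∞ a := 0). -/

import Mathlib

set_option maxHeartbeats 2000000 in
set_option synthInstance.maxHeartbeats 400000 in
/-- Let `d ≥ 2`, `a ∈ ℤ_p`, and `M` a Lie subalgebra of `L^d(a)` of
rank `e ≥ 2`. Then `M ≅ L^e(p^s a)` for some `s ∈ ℕ ∪ {∞}` (with `p^∞ a := 0`),
i.e. `M` has a basis realizing the defining relations of `L^e(c)` with `c = p^s a`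
or `c = 0`. -/
theorem stmt_11 (p : ℕ) [Fact p.Prime] (d : ℕ) (hd : 2 ≤ d) (a : ℤ_[p])
    (L : Type*) [LieRing L] [LieAlgebra ℤ_[p] L]
    (b : Module.Basis (Fin d) ℤ_[p] L)
    (hab : ∀ i j : Fin d, i ≠ ⟨0, by omega⟩ → j ≠ ⟨0, by omega⟩ → ⁅b i, b j⁆ = 0)
    (h0 : ∀ i : Fin d, i ≠ ⟨0, by omega⟩ → ⁅b ⟨0, by omega⟩, b i⁆ = a • b i)
    (M : LieSubalgebra ℤ_[p] L) (e : ℕ) (he : 2 ≤ e)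
    (hrk : Module.finrank ℤ_[p] ↥M = e) :
    ∃ c : ℤ_[p], ((∃ s : ℕ, c = (p : ℤ_[p]) ^ s * a) ∨ c = 0) ∧
      ∃ y : Module.Basis (Fin e) ℤ_[p] ↥M,
        (∀ i j : Fin e, i ≠ ⟨0, by omega⟩ → j ≠ ⟨0, by omega⟩ → ⁅y i, y j⁆ = 0) ∧
        ∀ i : Fin e, i ≠ ⟨0, by omega⟩ → ⁅y ⟨0, by omega⟩, y i⁆ = c • y i := by
  classical
  have hd0 : 0 < d := by omega
  set z : Fin d := ⟨0, hd0⟩ with hzdef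
  set π : L →ₗ[ℤ_[p]] ℤ_[p] := b.coord z with hπdef
  have hπb : ∀ i : Fin d, π (b i) = if i = z then 1 else 0 := by
    intro i
    simp [hπdef, Module.Basis.coord_apply, Finsupp.single_apply, eq_comm]
  -- the fundamental bilinear identity for the bracket of `L^d(a)`
  have key : ∀ x y : L, ⁅x, y⁆ = (a * π x) • y - (a * π y) • x := by
    letI : LieRing (Module.End ℤ_[p] L) := LieRing.ofAssociativeRing
    let B : L →ₗ[ℤ_[p]] Module.End ℤ_[p] L := (LieAlgebra.ad ℤ_[p] L).toLinearMap
    let B' : L →ₗ[ℤ_[p]] Module.End ℤ_[p] L :=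
      LinearMap.mk₂ ℤ_[p] (fun x y => (a * π x) • y - (a * π y) • x)
        (fun m₁ m₂ n => by simp only [map_add]; module)
        (fun c m n => by simp only [map_smul, smul_eq_mul]; module)
        (fun m n₁ n₂ => by simp only [map_add]; module)
        (fun c m n => by simp only [map_smul, smul_eq_mul]; module)
    have hBB' : B = B' := by
      apply LinearMap.ext_basis b b
      intro i j
      have hB : B (b i) (b j) = ⁅b i, b j⁆ := by
        simp [B, LieAlgebra.ad_apply]
      have hB' : B' (b i) (b j) = (a * π (b i)) • b j - (a * π (b j)) • b i := rfl
      rw [hB, hB']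
      by_cases hi : i = z <;> by_cases hj : j = z
      · subst hi; subst hj; simp
      · subst hi
        rw [h0 j hj, hπb, hπb, if_pos rfl, if_neg hj]
        simp
      · subst hj
        rw [← lie_skew, h0 i hi, hπb, hπb, if_pos rfl, if_neg hi]
        simp
      · rw [hab i j hi hj, hπb, hπb, if_neg hi, if_neg hj]
        simp
    intro x y
    have h := LinearMap.congr_fun (LinearMap.congr_fun hBB' x) y
    simpa [B, B', LieAlgebra.ad_apply] using h
  -- instances on `↥M`
  haveI : Module.Finite ℤ_[p] L := Module.Finite.of_basis b
  haveI : Module.Free ℤ_[p] L := Module.Free.of_basis b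
  haveI : IsNoetherian ℤ_[p] L := by infer_instance
  haveI : Module.Finite ℤ_[p] ↥M :=
    Module.Finite.iff_fg.mpr (IsNoetherian.noetherian (M.toSubmodule))
  haveI : NoZeroSMulDivisors ℤ_[p] ↥M := by
    constructor
    intro c x h
    have h3 := congrArg (Subtype.val) h
    simp only [SetLike.val_smul, ZeroMemClass.coe_zero] at h3
    rcases smul_eq_zero.mp h3 with h4 | h4
    · exact Or.inl h4
    · exact Or.inr (Subtype.coe_injective (by simpa using h4))
  haveI : Module.Free ℤ_[p] ↥M := Module.free_of_finite_type_torsion_free'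
  haveI : IsNoetherian ℤ_[p] ↥M := by infer_instance
  -- the coordinate functional on M
  set φ : ↥M →ₗ[ℤ_[p]] ℤ_[p] := π.comp M.incl.toLinearMap with hφdef
  have hφcoe : ∀ m : ↥M, φ m = π (m : L) := fun m => rfl
  -- bracket formula inside M
  have keyM : ∀ m n : ↥M, ((⁅m, n⁆ : ↥M) : L) = (a * φ m) • (n : L) - (a * φ n) • (m : L) := by
    intro m n
    rw [LieSubalgebra.coe_bracket]
    rw [key (m : L) (n : L), hφcoe, hφcoe]
  by_cases hφ0 : φ = 0
  · -- abelian case: c = 0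
    refine ⟨0, Or.inr rfl, (Module.finBasis ℤ_[p] ↥M).reindex (finCongr hrk), ?_, ?_⟩
    · intro i j _ _
      apply Subtype.coe_injective
      show ((⁅_, _⁆ : ↥M) : L) = ((0 : ↥M) : L)
      rw [keyM, hφ0]
      simp
    · intro i _
      apply Subtype.coe_injective
      show ((⁅_, _⁆ : ↥M) : L) = _
      rw [keyM, hφ0]
      simp
  · -- nonabelian case
    set I : Submodule ℤ_[p] ℤ_[p] := LinearMap.range φ with hIdef
    obtain ⟨g, hIspan⟩ : ∃ g : ℤ_[p], Submodule.span ℤ_[p] {g} = I :=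
      ⟨(inferInstance : I.IsPrincipal).generator,
        Submodule.IsPrincipal.span_singleton_generator I⟩
    have hg0 : g ≠ 0 := by
      intro h
      apply hφ0
      ext m
      have hm : φ m ∈ I := LinearMap.mem_range_self φ m
      rw [← hIspan, h, Submodule.span_singleton_eq_bot.mpr rfl] at hm
      exact (Submodule.mem_bot ℤ_[p]).mp hm
    obtain ⟨s, w, hgspec⟩ : ∃ (s : ℕ) (w : ℤ_[p]ˣ), g = (w : ℤ_[p]) * (p : ℤ_[p]) ^ s :=
      ⟨g.valuation, PadicInt.unitCoeff hg0, PadicInt.unitCoeff_spec hg0⟩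
    obtain ⟨m₁, hm₁⟩ : ∃ m : ↥M, φ m = g := by
      have : g ∈ I := by rw [← hIspan]; exact Submodule.mem_span_singleton_self g
      exact this
    have hps : (p : ℤ_[p]) ^ s ≠ 0 :=
      pow_ne_zero _ (Nat.cast_ne_zero.mpr (Fact.out : p.Prime).ne_zero)
    obtain ⟨u, hu⟩ : ∃ u : ↥M, φ u = (p : ℤ_[p]) ^ s := by
      refine ⟨((w⁻¹ : ℤ_[p]ˣ) : ℤ_[p]) • m₁, ?_⟩
      rw [map_smul, hm₁, smul_eq_mul, hgspec, ← mul_assoc, Units.inv_mul, one_mul]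
    have hu0 : u ≠ 0 := by
      intro h
      apply hps
      rw [← hu, h, map_zero]
    set P : Submodule ℤ_[p] ↥M := Submodule.span ℤ_[p] {u} with hPdef
    set K : Submodule ℤ_[p] ↥M := LinearMap.ker φ with hKdef
    have hcompl : IsCompl P K := by
      constructor
      · rw [Submodule.disjoint_def]
        intro x hxP hxK
        obtain ⟨t, rfl⟩ := Submodule.mem_span_singleton.mp hxP
        have ht : t * (p : ℤ_[p]) ^ s = 0 := by
          have := (LinearMap.mem_ker.mp hxK)
          rwa [map_smul, hu, smul_eq_mul] at this
        rcases mul_eq_zero.mp ht with h | h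
        · rw [h, zero_smul]
        · exact absurd h hps
      · rw [codisjoint_iff_le_sup]
        intro m _
        have hm : φ m ∈ I := LinearMap.mem_range_self φ m
        rw [← hIspan] at hm
        obtain ⟨t, ht⟩ := Submodule.mem_span_singleton.mp hm
        set t' : ℤ_[p] := t * (w : ℤ_[p]) with ht'def
        have hφm : φ m = t' * (p : ℤ_[p]) ^ s := by
          rw [← ht, smul_eq_mul, hgspec]; ring
        have hmeq : m = t' • u + (m - t' • u) := by abel
        rw [hmeq]
        apply Submodule.add_mem_sup
        · exact Submodule.smul_mem _ _ (Submodule.mem_span_singleton_self u)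
        · rw [LinearMap.mem_ker, map_sub, map_smul, hu, smul_eq_mul, hφm, sub_self]
    -- finrank of K
    have hPrank : Module.finrank ℤ_[p] P = 1 := by
      rw [← (LinearEquiv.toSpanNonzeroSingleton ℤ_[p] ↥M u hu0).finrank_eq]
      exact Module.finrank_self ℤ_[p]
    set eqv : (P × K) ≃ₗ[ℤ_[p]] ↥M := Submodule.prodEquivOfIsCompl P K hcompl
      with heqvdef
    haveI : Module.Finite ℤ_[p] ↥K := Module.Finite.iff_fg.mpr (IsNoetherian.noetherian K)
    haveI : Module.Free ℤ_[p] ↥K := Module.free_of_finite_type_torsion_free'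
    haveI : Module.Finite ℤ_[p] ↥P := Module.Finite.iff_fg.mpr (IsNoetherian.noetherian P)
    haveI : Module.Free ℤ_[p] ↥P := Module.free_of_finite_type_torsion_free'
    have hKrank : Module.finrank ℤ_[p] K = e - 1 := by
      have h1 : Module.finrank ℤ_[p] (P × K) = e := by rw [eqv.finrank_eq, hrk]
      rw [Module.finrank_prod, hPrank] at h1
      omega
    -- the basis
    have hee : 1 + (e - 1) = e := by omega
    set bP : Module.Basis (Fin 1) ℤ_[p] P :=
      (Module.Basis.singleton (Fin 1) ℤ_[p]).map
        (LinearEquiv.toSpanNonzeroSingleton ℤ_[p] ↥M u hu0) with hbPdef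
    set bK : Module.Basis (Fin (e - 1)) ℤ_[p] K :=
      (Module.finBasis ℤ_[p] K).reindex (finCongr hKrank) with hbKdef
    set eqIdx : (Fin 1 ⊕ Fin (e - 1)) ≃ Fin e :=
      finSumFinEquiv.trans (finCongr hee) with heqIdxdef
    set y : Module.Basis (Fin e) ℤ_[p] ↥M := ((bP.prod bK).map eqv).reindex eqIdx with hydef
    -- values of φ on the basis
    have hcoeP : ((bP 0 : P) : ↥M) = u := by
      rw [hbPdef]
      simp only [Module.Basis.map_apply, Module.Basis.singleton_apply]
      exact one_smul ℤ_[p] u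
    have hyidx : ∀ idx : Fin 1 ⊕ Fin (e - 1), y (eqIdx idx) = eqv ((bP.prod bK) idx) := by
      intro idx
      rw [hydef, Module.Basis.reindex_apply, Equiv.symm_apply_apply, Module.Basis.map_apply]
    have hφy : ∀ i : Fin e, φ (y i) = if (i : ℕ) = 0 then (p : ℤ_[p]) ^ s else 0 := by
      intro i
      obtain ⟨idx, rfl⟩ : ∃ idx, eqIdx idx = i := ⟨eqIdx.symm i, Equiv.apply_symm_apply _ _⟩
      rw [hyidx]
      cases idx with
      | inl j =>
        have hval : ((eqIdx (Sum.inl j) : Fin e) : ℕ) = 0 := by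
          rw [heqIdxdef]
          simp [finSumFinEquiv_apply_left, Subsingleton.elim j 0]
        rw [if_pos hval]
        have : eqv ((bP.prod bK) (Sum.inl j)) = (((bP.prod bK) (Sum.inl j)).1 : ↥M)
            + (((bP.prod bK) (Sum.inl j)).2 : ↥M) :=
          Submodule.coe_prodEquivOfIsCompl' _ _ _ _
        rw [this, Module.Basis.prod_apply_inl_fst, Module.Basis.prod_apply_inl_snd,
          Subsingleton.elim j 0, hcoeP]
        simpa using hu
      | inr k =>
        have hval : ((eqIdx (Sum.inr k) : Fin e) : ℕ) = 1 + (k : ℕ) := by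
          rw [heqIdxdef]
          simp [finSumFinEquiv_apply_right]
        rw [if_neg (by omega)]
        have : eqv ((bP.prod bK) (Sum.inr k)) = (((bP.prod bK) (Sum.inr k)).1 : ↥M)
            + (((bP.prod bK) (Sum.inr k)).2 : ↥M) :=
          Submodule.coe_prodEquivOfIsCompl' _ _ _ _
        rw [this, Module.Basis.prod_apply_inr_fst, Module.Basis.prod_apply_inr_snd]
        have hker : φ ((bK k : K) : ↥M) = 0 := LinearMap.mem_ker.mp (bK k).2
        simpa using hker
    -- conclude
    refine ⟨(p : ℤ_[p]) ^ s * a, Or.inl ⟨s, rfl⟩, y, ?_, ?_⟩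
    · intro i j hi hj
      have hi' : (i : ℕ) ≠ 0 := fun h => hi (Fin.ext h)
      have hj' : (j : ℕ) ≠ 0 := fun h => hj (Fin.ext h)
      apply Subtype.coe_injective
      show ((⁅_, _⁆ : ↥M) : L) = ((0 : ↥M) : L)
      rw [keyM, hφy, hφy, if_neg hi', if_neg hj']
      simp
    · intro i hi
      have hi' : (i : ℕ) ≠ 0 := fun h => hi (Fin.ext h)
      apply Subtype.coe_injective
      show ((⁅_, _⁆ : ↥M) : L) = _
      rw [keyM, hφy, hφy, if_neg hi', if_pos rfl]
      push_cast
      rw [mul_zero, zero_smul, sub_zero, mul_comm a]
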